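/- Let M ∈ ℝ^{I×J} be a nonzero matrix. Then ‖M‖_F^2 ≤ rank(M) · ‖M M^T‖_F. In particular, for A ∈ ℝ^{I×J} and an orthonormal Q ∈ ℝ^{I×K}, ‖A − Q Q^T A‖_F^2 ≤ rank(A) · ‖A A^T − Q Q^T A A^T‖_F. -/

import Mathlib

open Matrix

noncomputable section

/-- Frobenius norm of a real matrix. -/
def frob {m n : Type*} [Fintype m] [Fintype n] (A : Matrix m n ℝ) : ℝ :=
  Real.sqrt (∑ i, ∑ j, (A i j) ^ 2)

lemma frob_nonneg {m n : Type*} [Fintype m] [Fintype n] (A : Matrix m n ℝ) : 0 ≤ frob A :=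
  Real.sqrt_nonneg _

lemma frob_sq' {m n : Type*} [Fintype m] [Fintype n] (A : Matrix m n ℝ) :
    frob A ^ 2 = trace (A * Aᵀ) := by
  rw [frob, Real.sq_sqrt (by positivity)]
  simp [trace, mul_apply, diag, pow_two]

lemma myrank_pos {I J : ℕ} (M : Matrix (Fin I) (Fin J) ℝ) (hM : M ≠ 0) : 1 ≤ M.rank := by
  rw [Nat.one_le_iff_ne_zero]
  intro h0
  apply hM
  unfold Matrix.rank at h0
  have : LinearMap.range M.mulVecLin = ⊥ := Submodule.finrank_eq_zero.mp h0
  have h2 : M.mulVecLin = 0 := LinearMap.range_eq_bot.mp this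
  ext i j
  have := congrFun (congrFun (congrArg DFunLike.coe h2) (Pi.single j 1)) i
  simpa [mulVec_single] using this

lemma aux_trace_sq {n : ℕ} (S : Matrix (Fin n) (Fin n) ℝ) (hS : S.IsHermitian) :
    trace S ^ 2 ≤ (S.rank : ℝ) * trace (S * S) := by
  have hspec := hS.spectral_theorem
  rw [Unitary.conjStarAlgAut_apply] at hspec
  have hU : (star (hS.eigenvectorUnitary : Matrix (Fin n) (Fin n) ℝ)) *
      (hS.eigenvectorUnitary : Matrix (Fin n) (Fin n) ℝ) = 1 := Unitary.coe_star_mul_self _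
  set U : Matrix (Fin n) (Fin n) ℝ := (hS.eigenvectorUnitary : Matrix (Fin n) (Fin n) ℝ)
  set D : Matrix (Fin n) (Fin n) ℝ := diagonal (RCLike.ofReal ∘ hS.eigenvalues)
  have htr : trace S = ∑ i, hS.eigenvalues i := by
    rw [congrArg trace hspec, trace_mul_cycle, hU, one_mul]
    simp [D, trace_diagonal]
  have htr2 : trace (S * S) = ∑ i, hS.eigenvalues i ^ 2 := by
    rw [congrArg (fun X => trace (X * X)) hspec]
    have : U * D * star U * (U * D * star U) = U * (D * D) * star U := by
      rw [mul_assoc (U * D), show star U * (U * D * star U) = D * star U from by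
        rw [← mul_assoc, ← mul_assoc, hU, one_mul], ← mul_assoc, mul_assoc U D D]
    rw [this, trace_mul_cycle, hU, one_mul]
    simp [D, diagonal_mul_diagonal, trace_diagonal, pow_two]
  rw [htr, htr2, hS.rank_eq_card_non_zero_eigs]
  classical
  set t := Finset.univ.filter (fun i => hS.eigenvalues i ≠ 0) with ht
  have hsum : ∑ i, hS.eigenvalues i = ∑ i ∈ t, hS.eigenvalues i :=
    (Finset.sum_filter_ne_zero _).symm
  have hcard : (Fintype.card {i // hS.eigenvalues i ≠ 0} : ℝ) = (t.card : ℝ) := by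
    rw [Fintype.card_subtype]
  rw [hsum, hcard]
  calc (∑ i ∈ t, hS.eigenvalues i) ^ 2 ≤ (t.card : ℝ) * ∑ i ∈ t, hS.eigenvalues i ^ 2 :=
        sq_sum_le_card_mul_sum_sq
    _ ≤ (t.card : ℝ) * ∑ i, hS.eigenvalues i ^ 2 :=
        mul_le_mul_of_nonneg_left
          (Finset.sum_le_sum_of_subset_of_nonneg (Finset.subset_univ t)
            (fun i _ _ => sq_nonneg _)) (Nat.cast_nonneg _)

lemma frob_mul_proj_le {m n K : ℕ} (B : Matrix (Fin m) (Fin n) ℝ)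
    (Q : Matrix (Fin n) (Fin K) ℝ) (hQ : Qᵀ * Q = 1) :
    frob (B * (1 - Q * Qᵀ)) ≤ frob B := by
  set P : Matrix (Fin n) (Fin n) ℝ := 1 - Q * Qᵀ with hP
  have hX' : Qᵀ * (Q * Qᵀ) = Qᵀ := by rw [← Matrix.mul_assoc, hQ, Matrix.one_mul]
  have hPP : P * P = P := by
    simp only [hP, sub_mul, mul_sub, one_mul, mul_one, Matrix.mul_assoc, hX']
    abel
  have hPt : Pᵀ = P := by
    simp [hP, transpose_sub, transpose_mul]
  have h1 : frob (B * P) ^ 2 = trace (B * P * Bᵀ) := by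
    rw [frob_sq', transpose_mul, hPt]
    congr 1
    rw [← Matrix.mul_assoc (B * P) P Bᵀ, Matrix.mul_assoc B P P, hPP]
  have h2 : frob B ^ 2 - frob (B * P) ^ 2 = frob (B * Q) ^ 2 := by
    rw [frob_sq', h1, frob_sq', ← trace_sub]
    congr 1
    simp only [hP, Matrix.mul_sub, Matrix.mul_one, Matrix.sub_mul, Matrix.one_mul,
      transpose_mul, Matrix.mul_assoc]
    abel
  have h3 : frob (B * P) ^ 2 ≤ frob B ^ 2 := by
    nlinarith [sq_nonneg (frob (B * Q)), h2]
  exact (pow_le_pow_iff_left₀ (frob_nonneg _) (frob_nonneg _) two_ne_zero).mp h3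

lemma frob_sq_le_rank_mul {I J : ℕ} (M : Matrix (Fin I) (Fin J) ℝ) (r : ℕ) (hr : 1 ≤ r)
    (hrank : M.rank ≤ r) : frob M ^ 2 ≤ (r : ℝ) * frob (M * Mᵀ) := by
  have hSt : (M * Mᵀ)ᵀ = M * Mᵀ := by rw [transpose_mul, transpose_transpose]
  have hS : (M * Mᵀ).IsHermitian := by
    have : (M * Mᵀ)ᴴ = (M * Mᵀ)ᵀ := by ext i j; simp [conjTranspose_apply]
    exact this.trans hSt
  have key := aux_trace_sq (M * Mᵀ) hS
  have hrkS : (M * Mᵀ).rank = M.rank := rank_self_mul_transpose M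
  have e1 : frob M ^ 2 = trace (M * Mᵀ) := frob_sq' M
  have e2 : trace ((M * Mᵀ) * (M * Mᵀ)) = frob (M * Mᵀ) ^ 2 := by
    rw [frob_sq' (M * Mᵀ), hSt]
  rw [hrkS, e2] at key
  have hr' : (1 : ℝ) ≤ (r : ℝ) := by exact_mod_cast hr
  have hrank' : (M.rank : ℝ) ≤ (r : ℝ) := by exact_mod_cast hrank
  have hx : (frob M ^ 2) ^ 2 ≤ ((r : ℝ) * frob (M * Mᵀ)) ^ 2 := by
    rw [e1]
    have s1 : (M.rank : ℝ) * frob (M * Mᵀ) ^ 2 ≤ (r : ℝ) * frob (M * Mᵀ) ^ 2 :=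
      mul_le_mul_of_nonneg_right hrank' (sq_nonneg _)
    have s2 : (r : ℝ) * frob (M * Mᵀ) ^ 2 ≤ ((r : ℝ) * frob (M * Mᵀ)) ^ 2 := by
      rw [mul_pow]
      exact mul_le_mul_of_nonneg_right (by nlinarith) (sq_nonneg _)
    linarith [key, s1, s2]
  exact (pow_le_pow_iff_left₀ (by positivity)
    (mul_nonneg (by positivity) (frob_nonneg _)) two_ne_zero).mp hx

/-- `‖M‖_F^2 ≤ rank(M)·‖M Mᵀ‖_F`, and the consequence for projection residuals. -/
theorem stmt5 {I J : ℕ} (M : Matrix (Fin I) (Fin J) ℝ) (hM : M ≠ 0) :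
    frob M ^ 2 ≤ (M.rank : ℝ) * frob (M * Mᵀ) ∧
    ∀ (K : ℕ) (A : Matrix (Fin I) (Fin J) ℝ) (Q : Matrix (Fin I) (Fin K) ℝ),
      Qᵀ * Q = 1 →
      frob (A - Q * Qᵀ * A) ^ 2 ≤ (A.rank : ℝ) * frob (A * Aᵀ - Q * Qᵀ * (A * Aᵀ)) := by
  constructor
  · exact frob_sq_le_rank_mul M M.rank (myrank_pos M hM) le_rfl
  · intro K A Q hQ
    by_cases hA : A = 0
    · subst hA
      simp [frob, Matrix.rank_zero]
    · set P : Matrix (Fin I) (Fin I) ℝ := 1 - Q * Qᵀ with hP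
      have hPt : Pᵀ = P := by simp [hP, transpose_sub, transpose_mul]
      have hA1 : A - Q * Qᵀ * A = P * A := by rw [hP, Matrix.sub_mul, Matrix.one_mul]
      have hA2 : A * Aᵀ - Q * Qᵀ * (A * Aᵀ) = P * (A * Aᵀ) := by
        rw [hP, Matrix.sub_mul, Matrix.one_mul]
      rw [hA1, hA2]
      have h1 := frob_sq_le_rank_mul (P * A) A.rank (myrank_pos A hA)
        (rank_mul_le_right P A)
      have hprod : (P * A) * (P * A)ᵀ = (P * (A * Aᵀ)) * P := by
        rw [transpose_mul, hPt]
        simp only [Matrix.mul_assoc]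
      have h2 : frob ((P * A) * (P * A)ᵀ) ≤ frob (P * (A * Aᵀ)) := by
        rw [hprod, hP]
        exact frob_mul_proj_le _ Q hQ
      calc frob (P * A) ^ 2 ≤ (A.rank : ℝ) * frob ((P * A) * (P * A)ᵀ) := h1
        _ ≤ (A.rank : ℝ) * frob (P * (A * Aᵀ)) :=
            mul_le_mul_of_nonneg_left h2 (Nat.cast_nonneg _)

end
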